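/- For every n ≥ 3, M(F_cy, D_3, n) ≥ (n−2)!; that is, there exists a family of at least (n−2)! Hamilton cycles of K_n such that the union of any two distinct members of the family has a vertex of degree 3. -/

import Mathlib

/-- The edge set of the Hamilton cycle of the complete graph on `Fin n` that visits
the vertices cyclically in the order `σ 0, σ 1, …, σ (n-1), σ 0`. -/
def hamCycleEdges (n : ℕ) (σ : Equiv.Perm (Fin n)) : Finset (Sym2 (Fin n)) :=
  Finset.univ.image (fun i : Fin n =>
    s(σ i, σ ⟨((i : ℕ) + 1) % n, Nat.mod_lt _ i.pos⟩))

/-- `E` is the edge set of a Hamilton cycle of the complete graph on `Fin n`. -/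
def IsHamCycle (n : ℕ) (E : Finset (Sym2 (Fin n))) : Prop :=
  ∃ σ : Equiv.Perm (Fin n), E = hamCycleEdges n σ

/-- The degree of the vertex `v` in the graph on `Fin n` with edge set `E`. -/
def degIn (n : ℕ) (E : Finset (Sym2 (Fin n))) (v : Fin n) : ℕ :=
  (E.filter (fun e => v ∈ e)).card

lemma ham_eq (n : ℕ) [NeZero n] (hn : 3 ≤ n) (σ : Equiv.Perm (Fin n)) :
    hamCycleEdges n σ = Finset.univ.image (fun i : Fin n => s(σ i, σ (i+1))) := by
  unfold hamCycleEdges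
  congr 1; funext i; congr 2
  apply Fin.ext
  rw [Fin.add_def]
  simp [Fin.val_one']

lemma filter_ham (n : ℕ) [NeZero n] (hn : 3 ≤ n) (σ : Equiv.Perm (Fin n)) (i j : Fin n)
    (hj : j + 1 = i) :
    (hamCycleEdges n σ).filter (fun e => σ i ∈ e) = {s(σ j, σ i), s(σ i, σ (i+1))} := by
  rw [ham_eq n hn σ]
  ext e
  simp only [Finset.mem_filter, Finset.mem_image, Finset.mem_univ, true_and,
    Finset.mem_insert, Finset.mem_singleton]
  constructor
  · rintro ⟨⟨m, rfl⟩, hm⟩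
    rw [Sym2.mem_iff] at hm
    rcases hm with hm | hm
    · replace hm : i = m := σ.injective hm
      subst hm; right; rfl
    · replace hm : i = m + 1 := σ.injective hm
      have : m = j := by
        have : m + 1 = j + 1 := by rw [hj, hm]
        exact add_right_cancel this
      subst this; left; rw [hm]
  · rintro (rfl | rfl)
    · exact ⟨⟨j, by rw [hj]⟩, by simp⟩
    · exact ⟨⟨i, rfl⟩, by simp⟩

lemma union_pair {α : Type*} [DecidableEq α] (x1 x2 x3 : α) :
    ({x1, x2} ∪ {x1, x3} : Finset α) = {x1, x2, x3} := by
  ext e; simp only [Finset.mem_union, Finset.mem_insert, Finset.mem_singleton]; tauto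

lemma card_three {α : Type*} [DecidableEq α] (x1 x2 x3 : α)
    (h12 : x1 ≠ x2) (h13 : x1 ≠ x3) (h23 : x2 ≠ x3) :
    ({x1, x2, x3} : Finset α).card = 3 := by
  rw [Finset.card_insert_of_notMem (by simp [h12, h13]),
    Finset.card_insert_of_notMem (by simp [h23]), Finset.card_singleton]

lemma core (n : ℕ) [NeZero n] (hn : 3 ≤ n) (σ τ : Equiv.Perm (Fin n))
    (hσ0 : σ 0 = 0) (hσ1 : σ 1 = 1) (hτ0 : τ 0 = 0) (hτ1 : τ 1 = 1) (hne : σ ≠ τ) :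
    ∃ v : Fin n, degIn n (hamCycleEdges n σ ∪ hamCycleEdges n τ) v = 3 := by
  have hpos0 : True := trivial
  have hpos : 0 < n := by omega
  obtain ⟨i0, hi0⟩ := Function.ne_iff.mp (fun h => hne (Equiv.coe_fn_injective h))
  have h1n : 1 % n = 1 := Nat.mod_eq_of_lt (by omega)
  set P : ℕ → Prop := fun m => σ ⟨m % n, Nat.mod_lt _ hpos⟩ ≠ τ ⟨m % n, Nat.mod_lt _ hpos⟩ with hP
  have hex : ∃ m, P m := by
    refine ⟨i0.val, ?_⟩
    have he : (⟨i0.val % n, Nat.mod_lt _ hpos⟩ : Fin n) = i0 :=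
      Fin.ext (Nat.mod_eq_of_lt i0.isLt)
    simpa [hP, he] using hi0
  obtain ⟨k, hkn, hk, hmin⟩ : ∃ k, k < n ∧ P k ∧ ∀ j, j < k → ¬ P j := by
    refine ⟨Nat.find hex, ?_, Nat.find_spec hex, fun j hj => Nat.find_min hex hj⟩
    refine lt_of_le_of_lt (Nat.find_min' hex ?_) i0.isLt
    have he : (⟨i0.val % n, Nat.mod_lt _ hpos⟩ : Fin n) = i0 :=
      Fin.ext (Nat.mod_eq_of_lt i0.isLt)
    simpa [hP, he] using hi0
  have hnot0 : ¬ P 0 := by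
    have h0 : (⟨0 % n, Nat.mod_lt _ hpos⟩ : Fin n) = 0 := Fin.ext (by simp)
    rw [hP]
    simp only [not_ne_iff]
    rw [h0, hσ0, hτ0]
  have hnot1 : ¬ P 1 := by
    have h0 : (⟨1 % n, Nat.mod_lt _ hpos⟩ : Fin n) = 1 := Fin.ext (by simp [Fin.val_one', h1n])
    rw [hP]
    simp only [not_ne_iff]
    rw [h0, hσ1, hτ1]
  have h2k : 2 ≤ k := by
    rcases Nat.lt_or_ge k 2 with h | h
    · interval_cases k
      · exact absurd hk hnot0
      · exact absurd hk hnot1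
    · exact h
  set a : Fin n := ⟨k - 2, by omega⟩ with hadef
  set b : Fin n := ⟨k - 1, by omega⟩ with hbdef
  set c : Fin n := ⟨k, hkn⟩ with hcdef
  have hab : a + 1 = b := by
    apply Fin.ext
    rw [Fin.add_def]
    show ((k - 2) + (1 : Fin n).val) % n = k - 1
    rw [Fin.val_one', h1n, Nat.mod_eq_of_lt (by omega)]
    omega
  have hbc : b + 1 = c := by
    apply Fin.ext
    rw [Fin.add_def]
    show ((k - 1) + (1 : Fin n).val) % n = k
    rw [Fin.val_one', h1n, Nat.mod_eq_of_lt (by omega)]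
    omega
  have ha : σ a = τ a := by
    have := hmin (k - 2) (by omega)
    rw [hP] at this
    rw [not_ne_iff] at this
    have he : (⟨(k-2) % n, Nat.mod_lt _ hpos⟩ : Fin n) = a := Fin.ext (Nat.mod_eq_of_lt (by omega))
    rwa [he] at this
  have hb : σ b = τ b := by
    have := hmin (k - 1) (by omega)
    rw [hP] at this
    rw [not_ne_iff] at this
    have he : (⟨(k-1) % n, Nat.mod_lt _ hpos⟩ : Fin n) = b := Fin.ext (Nat.mod_eq_of_lt (by omega))
    rwa [he] at this
  have hc : σ c ≠ τ c := by
    rw [hP] at hk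
    have he : (⟨k % n, Nat.mod_lt _ hpos⟩ : Fin n) = c := Fin.ext (Nat.mod_eq_of_lt hkn)
    rwa [he] at hk
  have dab : a ≠ b := by intro h; have := congrArg Fin.val h; simp [hadef, hbdef] at this; omega
  have dac : a ≠ c := by intro h; have := congrArg Fin.val h; simp [hadef, hcdef] at this; omega
  have dbc : b ≠ c := by intro h; have := congrArg Fin.val h; simp [hbdef, hcdef] at this; omega
  refine ⟨σ b, ?_⟩
  have h1 : (hamCycleEdges n σ).filter (fun e => σ b ∈ e) = {s(σ a, σ b), s(σ b, σ c)} := by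
    have := filter_ham n hn σ b a hab
    rwa [hbc] at this
  have h2 : (hamCycleEdges n τ).filter (fun e => σ b ∈ e) = {s(σ a, σ b), s(σ b, τ c)} := by
    have := filter_ham n hn τ b a hab
    rw [hbc] at this
    rwa [← ha, ← hb] at this
  unfold degIn
  rw [Finset.filter_union, h1, h2]
  have d1 : s(σ a, σ b) ≠ s(σ b, σ c) := by
    intro h
    rcases Sym2.eq_iff.mp h with ⟨h1', h2'⟩ | ⟨h1', h2'⟩
    · exact dab (σ.injective h1')
    · exact dac (σ.injective h1')
  have d2 : s(σ a, σ b) ≠ s(σ b, τ c) := by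
    intro h
    rcases Sym2.eq_iff.mp h with ⟨h1', h2'⟩ | ⟨h1', h2'⟩
    · exact dab (σ.injective h1')
    · rw [ha] at h1'; exact dac (τ.injective h1')
  have d3 : s(σ b, σ c) ≠ s(σ b, τ c) := by
    intro h
    rcases Sym2.eq_iff.mp h with ⟨h1', h2'⟩ | ⟨h1', h2'⟩
    · exact hc h2'
    · exact dbc (σ.injective h2'.symm)
  rw [union_pair]
  exact card_three _ _ _ d1 d2 d3

lemma ham_inj (n : ℕ) [NeZero n] (hn : 3 ≤ n) (σ τ : Equiv.Perm (Fin n))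
    (hσ0 : σ 0 = 0) (hσ1 : σ 1 = 1) (hτ0 : τ 0 = 0) (hτ1 : τ 1 = 1)
    (h : hamCycleEdges n σ = hamCycleEdges n τ) : σ = τ := by
  by_contra hne
  obtain ⟨v, hv⟩ := core n hn σ τ hσ0 hσ1 hτ0 hτ1 hne
  rw [← h, Finset.union_self] at hv
  have hb : (σ⁻¹ v) - 1 + 1 = σ⁻¹ v := sub_add_cancel _ _
  have hf := filter_ham n hn σ (σ⁻¹ v) ((σ⁻¹ v) - 1) hb
  unfold degIn at hv
  rw [show v = σ (σ⁻¹ v) from (Equiv.apply_symm_apply σ v).symm] at hv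
  rw [hf] at hv
  have hle : ({s(σ ((σ⁻¹ v) - 1), σ (σ⁻¹ v)), s(σ (σ⁻¹ v), σ ((σ⁻¹ v)+1))} :
      Finset (Sym2 (Fin n))).card ≤ 2 := by
    apply le_trans (Finset.card_insert_le _ _)
    simp
  omega

/-- For every `n ≥ 3` there is a family of at least `(n−2)!` Hamilton cycles of `K_n`
such that the union of any two distinct members has a vertex of degree 3. -/
theorem stmt6 (n : ℕ) (hn : 3 ≤ n) :
    ∃ F : Finset (Finset (Sym2 (Fin n))),
      (∀ E ∈ F, IsHamCycle n E) ∧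
      (∀ E₁ ∈ F, ∀ E₂ ∈ F, E₁ ≠ E₂ → ∃ v : Fin n, degIn n (E₁ ∪ E₂) v = 3) ∧
      Nat.factorial (n - 2) ≤ F.card := by
  classical
  haveI : NeZero n := ⟨by omega⟩
  have h1n : 1 % n = 1 := Nat.mod_eq_of_lt (by omega)
  let e : Fin (n-2) ≃ {x : Fin n // 2 ≤ (x : ℕ)} :=
    { toFun := fun i => ⟨⟨i.val + 2, by have := i.isLt; omega⟩, by simp⟩
      invFun := fun x => ⟨x.val.val - 2, by have := x.val.isLt; have := x.prop; omega⟩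
      left_inv := fun i => by apply Fin.ext; simp
      right_inv := fun x => by
        apply Subtype.ext; apply Fin.ext; have := x.prop; simp; omega }
  let ext : Equiv.Perm (Fin (n-2)) → Equiv.Perm (Fin n) := fun ρ => ρ.extendDomain e
  have hfix0 : ∀ ρ, ext ρ 0 = 0 := fun ρ =>
    Equiv.Perm.extendDomain_apply_not_subtype ρ e (by simp)
  have hfix1 : ∀ ρ, ext ρ 1 = 1 := fun ρ =>
    Equiv.Perm.extendDomain_apply_not_subtype ρ e (by simp [Fin.val_one', h1n])
  have hextinj : Function.Injective ext := by
    intro ρ₁ ρ₂ h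
    apply Equiv.ext
    intro x
    apply e.injective
    apply Subtype.coe_injective
    have hh1 := Equiv.Perm.extendDomain_apply_image ρ₁ e x
    have hh2 := Equiv.Perm.extendDomain_apply_image ρ₂ e x
    rw [show ρ₁.extendDomain e = ρ₂.extendDomain e from h] at hh1
    exact hh1.symm.trans hh2
  refine ⟨Finset.univ.image (fun ρ => hamCycleEdges n (ext ρ)), ?_, ?_, ?_⟩
  · intro E hE
    obtain ⟨ρ, _, rfl⟩ := Finset.mem_image.mp hE
    exact ⟨ext ρ, rfl⟩
  · intro E₁ hE₁ E₂ hE₂ hne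
    obtain ⟨ρ₁, _, rfl⟩ := Finset.mem_image.mp hE₁
    obtain ⟨ρ₂, _, rfl⟩ := Finset.mem_image.mp hE₂
    apply core n hn _ _ (hfix0 ρ₁) (hfix1 ρ₁) (hfix0 ρ₂) (hfix1 ρ₂)
    intro h
    exact hne (by rw [h])
  · have hinj : Function.Injective (fun ρ => hamCycleEdges n (ext ρ)) := by
      intro ρ₁ ρ₂ h
      apply hextinj
      exact ham_inj n hn _ _ (hfix0 ρ₁) (hfix1 ρ₁) (hfix0 ρ₂) (hfix1 ρ₂) h
    rw [Finset.card_image_of_injective _ hinj, Finset.card_univ, Fintype.card_perm,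
      Fintype.card_fin]
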